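/- If (X, Π) is a finite quasiconcave quasisubmodular aggregative game for which a fESS exists, then in the induced symmetric game with payoff π(x, y) = Π(x, a(x, y)), imitation is not subject to a money pump. -/
import Mathlib


/-- The imitator's action sequence: `y₀` initially; imitate the opponent's previous
action iff it earned a strictly positive relative payoff. -/
noncomputable def imitSeq {X : Type*} (Δ : X → X → ℝ) (x : ℕ → X) (y0 : X) : ℕ → X
  | 0 => y0
  | t + 1 => if 0 < Δ (x t) (imitSeq Δ x y0 t) then x t else imitSeq Δ x y0 t

/-- Imitation is not subject to a money pump: there is a uniform bound `M` on the sum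
of the opponent's relative payoffs, for every initial action of the imitator, every
opponent sequence, and every horizon. -/
def NoMoneyPump {X : Type*} (Δ : X → X → ℝ) : Prop :=
  ∃ M : ℝ, ∀ (y0 : X) (x : ℕ → X) (T : ℕ),
    ∑ t ∈ Finset.range (T + 1), Δ (x t) (imitSeq Δ x y0 t) ≤ M

theorem stmt17
    {X Z : Type*} [LinearOrder X] [LinearOrder Z] [Nonempty X]
    (agg : X → X → Z)
    (hsym : ∀ x y : X, agg x y = agg y x)
    (hmono : ∀ x' x'' y' y'' : X, x' ≤ x'' → y' ≤ y'' → (x'', y'') ≠ (x', y') →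
      agg x' y' < agg x'' y'')
    (Pi : X → Z → ℝ)
    [Fintype X]
    (hqsub : ∀ (x' x'' : X) (z' z'' : Z), x' < x'' → z' < z'' →
      (0 ≤ Pi x'' z'' - Pi x' z'' → 0 ≤ Pi x'' z' - Pi x' z') ∧
      (0 < Pi x'' z'' - Pi x' z'' → 0 < Pi x'' z' - Pi x' z'))
    (hqc : ∀ (x x' x'' : X) (z : Z), x < x' → x' < x'' →
      min (Pi x z) (Pi x'' z) ≤ Pi x' z)
    (hfess : ∃ xs : X, ∀ x : X, Pi x (agg xs x) ≤ Pi xs (agg xs x))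
    (Δ : X → X → ℝ)
    (hΔ : ∀ x y : X, Δ x y = Pi x (agg x y) - Pi y (agg y x)) :
    NoMoneyPump Δ := by
  classical
  obtain ⟨x0⟩ := (inferInstance : Nonempty X)
  have hanti : ∀ a b : X, Δ b a = - Δ a b := by
    intro a b; rw [hΔ, hΔ]; ring
  have hdiag : ∀ a : X, Δ a a = 0 := by
    intro a; rw [hΔ]; ring
  have hD : ∀ a b : X, Δ a b = Pi a (agg a b) - Pi b (agg a b) := by
    intro a b; rw [hΔ, hsym b a]
  -- Lemma A: if a beats b from below (b < a), then a beats every c ≤ b.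
  have lemA : ∀ a b c : X, b < a → 0 < Δ a b → c ≤ b → 0 < Δ a c := by
    intro a b c hba hpos hcb
    rcases eq_or_lt_of_le hcb with rfl | hcb
    · exact hpos
    · have hz : agg a c < agg a b := by
        apply hmono a a c b le_rfl hcb.le
        simp [Prod.ext_iff, hcb.ne']
      rw [hD] at hpos
      have h1 : 0 < Pi a (agg a c) - Pi b (agg a c) :=
        (hqsub b a (agg a c) (agg a b) hba hz).2 hpos
      have h2 := hqc c b a (agg a c) hcb hba
      rw [hD]
      rcases min_le_iff.mp h2 with h | h
      · linarith
      · linarith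
  -- Lemma B: if a beats b from above (a < b), then a beats every c ≥ b.
  have lemB : ∀ a b c : X, a < b → 0 < Δ a b → b ≤ c → 0 < Δ a c := by
    intro a b c hab hpos hbc
    rcases eq_or_lt_of_le hbc with rfl | hbc
    · exact hpos
    · have hz : agg a b < agg a c := by
        apply hmono a a b c le_rfl hbc.le
        simp [Prod.ext_iff, hbc.ne']
      rw [hD] at hpos
      have himp := (hqsub a b (agg a b) (agg a c) hab hz).1
      have h1 : Pi b (agg a c) - Pi a (agg a c) < 0 := by
        by_contra h
        push_neg at h
        have := himp h
        linarith
      have h2 := hqc a b c (agg a c) hab hbc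
      rw [hD]
      rcases min_le_iff.mp h2 with h | h
      · linarith
      · linarith
  -- Key: after a switch at time s, the imitator never returns to its action at s.
  have key : ∀ (y0 : X) (x : ℕ → X) (s u : ℕ), s < u →
      0 < Δ (x s) (imitSeq Δ x y0 s) →
      imitSeq Δ x y0 u ≠ imitSeq Δ x y0 s := by
    intro y0 x s u hsu hsw heq
    set w : ℕ → X := imitSeq Δ x y0 with hw
    have hstep : ∀ t : ℕ, w (t + 1) = if 0 < Δ (x t) (w t) then x t else w t := by
      intro t; rw [hw]; rw [imitSeq]
    have hlazy : ∀ t, w (t + 1) = w t ∨ 0 < Δ (w (t + 1)) (w t) := by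
      intro t
      rw [hstep t]
      split_ifs with h
      · exact Or.inr h
      · exact Or.inl rfl
    have hxs : w (s + 1) = x s := by rw [hstep s, if_pos hsw]
    have hes : 0 < Δ (w (s + 1)) (w s) := by rw [hxs]; exact hsw
    have hnes : w (s + 1) ≠ w s := by
      intro h; rw [h, hdiag] at hes; exact lt_irrefl 0 hes
    have huF : u ∈ Finset.Icc (s + 1) u := Finset.mem_Icc.mpr ⟨hsu, le_rfl⟩
    have hne : (Finset.Icc (s + 1) u).Nonempty := ⟨u, huF⟩
    set F := Finset.Icc (s + 1) u with hF
    set G := F.image w with hG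
    have hGne : G.Nonempty := hne.image w
    set Mx := G.max' hGne with hMxdef
    set mn := G.min' hGne with hmndef
    have hmemG : ∀ t, s ≤ t → t ≤ u → w t ∈ G := by
      intro t h1 h2
      rcases eq_or_lt_of_le h1 with rfl | h1
      · rw [← heq]; exact Finset.mem_image_of_mem w huF
      · exact Finset.mem_image_of_mem w (Finset.mem_Icc.mpr ⟨h1, h2⟩)
    -- the max of the cycle beats the min
    have hMm : 0 < Δ Mx mn := by
      obtain ⟨i, hiF, hwi⟩ := Finset.mem_image.mp (G.max'_mem hGne)
      set A := F.filter (fun i => w i = Mx) with hA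
      have hAne : A.Nonempty := ⟨i, Finset.mem_filter.mpr ⟨hiF, hwi⟩⟩
      set i0 := A.min' hAne with hi0def
      have hi0A : i0 ∈ A := A.min'_mem hAne
      have hi0F : i0 ∈ F := (Finset.mem_filter.mp hi0A).1
      have hwi0 : w i0 = Mx := (Finset.mem_filter.mp hi0A).2
      obtain ⟨hi0l, hi0r⟩ := Finset.mem_Icc.mp hi0F
      have hpG : w (i0 - 1) ∈ G := hmemG _ (by omega) (by omega)
      have hpne : w (i0 - 1) ≠ Mx := by
        intro hp
        rcases eq_or_lt_of_le hi0l with h | h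
        · have hs1 : i0 - 1 = s := by omega
          rw [hs1] at hp
          exact hnes (by rw [h, hwi0]; exact hp.symm)
        · have hmem : i0 - 1 ∈ A :=
            Finset.mem_filter.mpr ⟨Finset.mem_Icc.mpr ⟨by omega, by omega⟩, hp⟩
          have := A.min'_le _ hmem
          omega
      have hedge : 0 < Δ (w i0) (w (i0 - 1)) := by
        have h := hlazy (i0 - 1)
        have hsucc : i0 - 1 + 1 = i0 := by omega
        rw [hsucc] at h
        rcases h with h | h
        · exact absurd (h ▸ hwi0) hpne
        · exact h
      rw [hwi0] at hedge
      have hpltM : w (i0 - 1) < Mx := lt_of_le_of_ne (Finset.le_max' G _ hpG) hpne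
      exact lemA Mx (w (i0 - 1)) mn hpltM hedge (Finset.min'_le G _ hpG)
    -- the min of the cycle beats the max
    have hmM : 0 < Δ mn Mx := by
      obtain ⟨i, hiF, hwi⟩ := Finset.mem_image.mp (G.min'_mem hGne)
      set B := F.filter (fun i => w i = mn) with hB
      have hBne : B.Nonempty := ⟨i, Finset.mem_filter.mpr ⟨hiF, hwi⟩⟩
      set j0 := B.min' hBne with hj0def
      have hj0B : j0 ∈ B := B.min'_mem hBne
      have hj0F : j0 ∈ F := (Finset.mem_filter.mp hj0B).1
      have hwj0 : w j0 = mn := (Finset.mem_filter.mp hj0B).2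
      obtain ⟨hj0l, hj0r⟩ := Finset.mem_Icc.mp hj0F
      have hpG : w (j0 - 1) ∈ G := hmemG _ (by omega) (by omega)
      have hpne : w (j0 - 1) ≠ mn := by
        intro hp
        rcases eq_or_lt_of_le hj0l with h | h
        · have hs1 : j0 - 1 = s := by omega
          rw [hs1] at hp
          exact hnes (by rw [h, hwj0]; exact hp.symm)
        · have hmem : j0 - 1 ∈ B :=
            Finset.mem_filter.mpr ⟨Finset.mem_Icc.mpr ⟨by omega, by omega⟩, hp⟩
          have := B.min'_le _ hmem
          omega
      have hedge : 0 < Δ (w j0) (w (j0 - 1)) := by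
        have h := hlazy (j0 - 1)
        have hsucc : j0 - 1 + 1 = j0 := by omega
        rw [hsucc] at h
        rcases h with h | h
        · exact absurd (h ▸ hwj0) hpne
        · exact h
      rw [hwj0] at hedge
      have hmltp : mn < w (j0 - 1) := lt_of_le_of_ne (Finset.min'_le G _ hpG) (Ne.symm hpne)
      exact lemB mn (w (j0 - 1)) Mx hmltp hedge (Finset.le_max' G _ hpG)
    have := hanti Mx mn
    linarith
  -- uniform bound on relative payoffs
  have hCne : (Finset.univ.image fun p : X × X => Δ p.1 p.2).Nonempty :=
    ⟨Δ x0 x0, Finset.mem_image.mpr ⟨(x0, x0), Finset.mem_univ _, rfl⟩⟩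
  set C := (Finset.univ.image fun p : X × X => Δ p.1 p.2).max' hCne with hCdef
  have hC : ∀ a b : X, Δ a b ≤ C := by
    intro a b
    apply Finset.le_max'
    exact Finset.mem_image.mpr ⟨(a, b), Finset.mem_univ _, rfl⟩
  have hC0 : 0 ≤ C := by
    have := hC x0 x0
    rw [hdiag] at this
    exact this
  refine ⟨Fintype.card X * C, ?_⟩
  intro y0 x T
  set w : ℕ → X := imitSeq Δ x y0 with hw
  set S := (Finset.range (T + 1)).filter (fun t => 0 < Δ (x t) (w t)) with hS
  have hsplit : ∑ t ∈ Finset.range (T + 1), Δ (x t) (w t) ≤ ∑ t ∈ S, Δ (x t) (w t) := by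
    have h2 : ∑ t ∈ (Finset.range (T + 1)).filter (fun t => ¬ 0 < Δ (x t) (w t)),
        Δ (x t) (w t) ≤ 0 :=
      Finset.sum_nonpos (fun t ht => le_of_not_gt (Finset.mem_filter.mp ht).2)
    have h3 := Finset.sum_filter_add_sum_filter_not (Finset.range (T + 1))
      (fun t => 0 < Δ (x t) (w t)) (fun t => Δ (x t) (w t))
    rw [hS]
    linarith
  have hcard : S.card ≤ Fintype.card X := by
    have hinj : Set.InjOn (fun t => w t) ↑S := by
      intro t1 ht1 t2 ht2 hEq
      simp only at hEq
      by_contra hne2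
      rcases lt_or_gt_of_ne hne2 with h | h
      · exact key y0 x t1 t2 h (Finset.mem_filter.mp (Finset.mem_coe.mp ht1)).2 hEq.symm
      · exact key y0 x t2 t1 h (Finset.mem_filter.mp (Finset.mem_coe.mp ht2)).2 hEq
    calc S.card = (S.image (fun t => w t)).card := (Finset.card_image_of_injOn hinj).symm
      _ ≤ Fintype.card X := Finset.card_le_univ _
  have hsum2 : ∑ t ∈ S, Δ (x t) (w t) ≤ (S.card : ℝ) * C := by
    calc ∑ t ∈ S, Δ (x t) (w t) ≤ ∑ _t ∈ S, C := Finset.sum_le_sum (fun t _ => hC _ _)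
      _ = (S.card : ℝ) * C := by rw [Finset.sum_const, nsmul_eq_mul]
  have hfin : (S.card : ℝ) * C ≤ (Fintype.card X : ℝ) * C := by
    apply mul_le_mul_of_nonneg_right _ hC0
    exact_mod_cast hcard
  linarith
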